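/- Let F : T → c(M) with V⁺(F,T) < +∞ and let t ∈ T be a left limit point of T. Then V⁺(F, T∩(-∞,t]) = V⁺(F, T∩(-∞,t)) + limsup_{T ∋ s → t−0} e(F(s),F(t)). -/

import Mathlib

open Set Metric EMetric Filter
open scoped ENNReal Pointwise

noncomputable def exc {M : Type*} [MetricSpace M] (X Y : Set M) : ℝ≥0∞ :=
  ⨆ x ∈ X, EMetric.infEdist x Y

noncomputable def varBy {M : Type*} [MetricSpace M]
    (D : Set M → Set M → ℝ≥0∞) (F : ℝ → Set M) (T : Set ℝ) : ℝ≥0∞ :=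
  ⨆ p : {p : ℕ × (ℕ → ℝ) // Monotone p.2 ∧ ∀ i, p.2 i ∈ T},
    ∑ i ∈ Finset.range p.1.1, D (F (p.1.2 i)) (F (p.1.2 (i + 1)))

noncomputable def varPlus {M : Type*} [MetricSpace M] (F : ℝ → Set M) (T : Set ℝ) : ℝ≥0∞ :=
  varBy exc F T

noncomputable def varMinus {M : Type*} [MetricSpace M] (F : ℝ → Set M) (T : Set ℝ) : ℝ≥0∞ :=
  varBy (fun X Y => exc Y X) F T

noncomputable def varH {M : Type*} [MetricSpace M] (F : ℝ → Set M) (T : Set ℝ) : ℝ≥0∞ :=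
  varBy EMetric.hausdorffEdist F T

section Aux

variable {M : Type*} [MetricSpace M]

lemma exc_self (X : Set M) : exc X X = 0 :=
  le_antisymm (iSup₂_le fun _ hx => le_of_eq (infEdist_zero_of_mem hx)) (zero_le)

lemma exc_triangle (X Y Z : Set M) : exc X Z ≤ exc X Y + exc Y Z := by
  refine iSup₂_le fun x hx => ?_
  have h2 : infEdist x Z ≤ ⨅ y ∈ Y, (edist x y + exc Y Z) :=
    le_iInf₂ fun y hy =>
      (infEdist_le_edist_add_infEdist (y := y)).trans
        (add_le_add_right (le_iSup₂ (f := fun y (_ : y ∈ Y) => infEdist y Z) y hy) _)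
  have h3 : (⨅ y ∈ Y, (edist x y + exc Y Z)) = infEdist x Y + exc Y Z := by
    rw [infEdist, infEDist]; simp only [ENNReal.iInf_add]
  exact (h2.trans_eq h3).trans
    (add_le_add_left (le_iSup₂ (f := fun x (_ : x ∈ X) => infEdist x Y) x hx) _)

lemma varPlus_mono {T₁ T₂ : Set ℝ} (h : T₁ ⊆ T₂) (F : ℝ → Set M) :
    varPlus F T₁ ≤ varPlus F T₂ := by
  simp only [varPlus, varBy]
  exact iSup_le fun p => le_iSup_of_le ⟨p.1, p.2.1, fun i => h (p.2.2 i)⟩ le_rfl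

lemma varPlus_Iic_add_exc_le {T : Set ℝ} {F : ℝ → Set M} {s t : ℝ}
    (hsT : s ∈ T) (htT : t ∈ T) (hst : s ≤ t) :
    varPlus F (T ∩ Iic s) + exc (F s) (F t) ≤ varPlus F (T ∩ Iic t) := by
  classical
  haveI : Nonempty {p : ℕ × (ℕ → ℝ) // Monotone p.2 ∧ ∀ i, p.2 i ∈ T ∩ Iic s} :=
    ⟨⟨(0, fun _ => s), monotone_const, fun _ => ⟨hsT, Set.mem_Iic.mpr le_rfl⟩⟩⟩
  simp only [varPlus, varBy]
  rw [ENNReal.iSup_add]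
  refine iSup_le ?_
  rintro ⟨⟨n, u⟩, hu, hmem⟩
  dsimp only
  let v : ℕ → ℝ := fun i => if i ≤ n then u i else if i = n + 1 then s else t
  have hv0 : ∀ i, i ≤ n → v i = u i := fun i h => by
    show (if i ≤ n then u i else if i = n + 1 then s else t) = u i
    rw [if_pos h]
  have hv1 : v (n + 1) = s := by
    show (if n + 1 ≤ n then u (n + 1) else if n + 1 = n + 1 then s else t) = s
    rw [if_neg (by omega), if_pos rfl]
  have hv2 : ∀ i, n + 1 < i → v i = t := fun i h => by
    show (if i ≤ n then u i else if i = n + 1 then s else t) = t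
    rw [if_neg (by omega), if_neg (by omega)]
  have hmono : Monotone v := by
    refine monotone_nat_of_le_succ fun i => ?_
    rcases Nat.lt_or_ge i n with h | h
    · rw [hv0 i h.le, hv0 (i + 1) h]
      exact hu (Nat.le_succ i)
    · rcases Nat.eq_or_lt_of_le h with h2 | h2
      · have : i = n := h2.symm
        subst this
        rw [hv0 i le_rfl, hv1]
        exact Set.mem_Iic.mp (hmem i).2
      · rcases Nat.eq_or_lt_of_le h2 with h3 | h3
        · have : i = n + 1 := h3.symm
          subst this
          rw [hv1, hv2 (n + 2) (by omega)]
          exact hst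
        · rw [hv2 i h3, hv2 (i + 1) (by omega)]
  have hmemv : ∀ i, v i ∈ T ∩ Iic t := by
    intro i
    by_cases h : i ≤ n
    · rw [hv0 i h]; exact ⟨(hmem i).1, Set.mem_Iic.mpr ((Set.mem_Iic.mp (hmem i).2).trans hst)⟩
    · by_cases h2 : i = n + 1
      · rw [h2, hv1]; exact ⟨hsT, Set.mem_Iic.mpr hst⟩
      · rw [hv2 i (by omega)]; exact ⟨htT, Set.self_mem_Iic⟩
  have hsum : ∑ i ∈ Finset.range n, exc (F (v i)) (F (v (i + 1)))
      = ∑ i ∈ Finset.range n, exc (F (u i)) (F (u (i + 1))) :=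
    Finset.sum_congr rfl fun i hi => by
      have hi' := Finset.mem_range.mp hi
      rw [hv0 i (by omega), hv0 (i + 1) (by omega)]
  calc (∑ i ∈ Finset.range n, exc (F (u i)) (F (u (i + 1)))) + exc (F s) (F t)
      ≤ ∑ i ∈ Finset.range (n + 2), exc (F (v i)) (F (v (i + 1))) := by
        rw [Finset.sum_range_succ, Finset.sum_range_succ, hsum, hv0 n le_rfl, hv1,
          hv2 (n + 2) (by omega)]
        exact add_le_add_left le_self_add _
    _ ≤ _ := le_iSup_of_le ⟨(n + 2, v), hmono, hmemv⟩ le_rfl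

lemma sum_exc_le_varPlus {T : Set ℝ} {F : ℝ → Set M} (n : ℕ) (u : ℕ → ℝ)
    (hu : Monotone u) (hmem : ∀ i, u i ∈ T) :
    ∑ i ∈ Finset.range n, exc (F (u i)) (F (u (i + 1))) ≤ varPlus F (T ∩ Iic (u n)) := by
  induction n with
  | zero => simp
  | succ n ih =>
      rw [Finset.sum_range_succ]
      exact le_trans (add_le_add_left ih _)
        (varPlus_Iic_add_exc_le (hmem n) (hmem (n + 1)) (hu (Nat.le_succ n)))

lemma sum_exc_le_jumpSup {T : Set ℝ} {F : ℝ → Set M} {t : ℝ} (n : ℕ) (u : ℕ → ℝ)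
    (hu : Monotone u) (hmem : ∀ i, u i ∈ T ∩ Iic t) :
    ∑ i ∈ Finset.range n, exc (F (u i)) (F (u (i + 1))) ≤
      ⨆ s ∈ T ∩ Iio t, (varPlus F (T ∩ Iic s) + exc (F s) (F t)) := by
  induction n with
  | zero => simp
  | succ n ih =>
      rcases lt_or_eq_of_le (Set.mem_Iic.mp (hmem (n + 1)).2) with h | h
      · refine le_trans (sum_exc_le_varPlus (n + 1) u hu (fun i => (hmem i).1)) ?_
        refine le_trans ?_
          (le_iSup₂ (f := fun s (_ : s ∈ T ∩ Iio t) => varPlus F (T ∩ Iic s) + exc (F s) (F t))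
            (u (n + 1)) ⟨(hmem (n + 1)).1, h⟩)
        exact le_self_add
      · rw [Finset.sum_range_succ, h]
        rcases lt_or_eq_of_le (Set.mem_Iic.mp (hmem n).2) with h2 | h2
        · refine le_trans
            (add_le_add_left (sum_exc_le_varPlus n u hu (fun i => (hmem i).1)) _) ?_
          exact le_iSup₂ (f := fun s (_ : s ∈ T ∩ Iio t) => varPlus F (T ∩ Iic s) + exc (F s) (F t))
            (u n) ⟨(hmem n).1, h2⟩
        · rw [h2, exc_self, add_zero]
          exact ih

lemma varPlus_Iic_eq_biSup {T : Set ℝ} {F : ℝ → Set M} {t : ℝ} (ht : t ∈ T) :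
    varPlus F (T ∩ Iic t) = ⨆ s ∈ T ∩ Iio t, (varPlus F (T ∩ Iic s) + exc (F s) (F t)) := by
  refine le_antisymm ?_ (iSup₂_le fun s hs => varPlus_Iic_add_exc_le hs.1 ht hs.2.le)
  have hrfl : varPlus F (T ∩ Iic t)
      = ⨆ p : {p : ℕ × (ℕ → ℝ) // Monotone p.2 ∧ ∀ i, p.2 i ∈ T ∩ Iic t},
        ∑ i ∈ Finset.range p.1.1, exc (F (p.1.2 i)) (F (p.1.2 (i + 1))) := rfl
  rw [hrfl]
  exact iSup_le fun p => sum_exc_le_jumpSup p.1.1 p.1.2 p.2.1 p.2.2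

lemma varPlus_Iio_eq_biSup {T : Set ℝ} {F : ℝ → Set M} {t : ℝ} :
    varPlus F (T ∩ Iio t) = ⨆ s ∈ T ∩ Iio t, varPlus F (T ∩ Iic s) := by
  refine le_antisymm ?_
    (iSup₂_le fun s hs => varPlus_mono (show T ∩ Iic s ⊆ T ∩ Iio t from fun x hx => ⟨hx.1, lt_of_le_of_lt (Set.mem_Iic.mp hx.2) hs.2⟩) F)
  have hrfl : varPlus F (T ∩ Iio t)
      = ⨆ p : {p : ℕ × (ℕ → ℝ) // Monotone p.2 ∧ ∀ i, p.2 i ∈ T ∩ Iio t},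
        ∑ i ∈ Finset.range p.1.1, exc (F (p.1.2 i)) (F (p.1.2 (i + 1))) := rfl
  rw [hrfl]
  refine iSup_le fun p => ?_
  refine le_trans (sum_exc_le_varPlus p.1.1 p.1.2 p.2.1 p.2.2) ?_
  refine le_trans (varPlus_mono (show (T ∩ Iio t) ∩ Iic (p.1.2 p.1.1) ⊆ T ∩ Iic (p.1.2 p.1.1) from fun x hx => ⟨hx.1.1, hx.2⟩) F) ?_
  exact le_iSup₂ (f := fun s (_ : s ∈ T ∩ Iio t) => varPlus F (T ∩ Iic s))
    (p.1.2 p.1.1) (p.2.2 p.1.1)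

end Aux

/-- V⁺(F, T∩(-∞,t]) = V⁺(F, T∩(-∞,t)) + limsup_{T ∋ s → t−0} e(F(s),F(t)). -/
theorem varPlus_Iic_eq_Iio_add_jump {M : Type*} [MetricSpace M]
    (T : Set ℝ) (F : ℝ → Set M)
    (hF : ∀ t ∈ T, (F t).Nonempty ∧ IsCompact (F t))
    (hV : varPlus F T < ⊤) (t : ℝ) (ht : t ∈ T)
    (hleft : ∀ ε > 0, (T ∩ Set.Ioo (t - ε) t).Nonempty) :
    varPlus F (T ∩ Set.Iic t) =
      varPlus F (T ∩ Set.Iio t) +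
      Filter.limsup (fun s => exc (F s) (F t)) (nhdsWithin t (T ∩ Set.Iio t)) := by
  have hneS : (T ∩ Iio t).Nonempty := by
    obtain ⟨s, hsT, _, hs2⟩ := hleft 1 one_pos
    exact ⟨s, hsT, hs2⟩
  haveI hNB : (nhdsWithin t (T ∩ Iio t)).NeBot := by
    refine mem_closure_iff_nhdsWithin_neBot.mp ?_
    rw [Metric.mem_closure_iff]
    intro ε hε
    obtain ⟨s, hsT, h1, h2⟩ := hleft ε hε
    refine ⟨s, ⟨hsT, h2⟩, ?_⟩
    rw [Real.dist_eq, abs_of_pos (by linarith)]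
    linarith
  rw [varPlus_Iic_eq_biSup ht, varPlus_Iio_eq_biSup]
  refine le_antisymm (iSup₂_le fun s hs => ?_) ?_
  · rw [limsup_eq_iInf_iSup, ENNReal.add_iInf]
    refine le_iInf fun A => ?_
    rw [ENNReal.add_iInf]
    refine le_iInf fun hA => ?_
    have hmemF : A ∩ ((T ∩ Iio t) ∩ Ioi s) ∈ nhdsWithin t (T ∩ Iio t) :=
      inter_mem hA (inter_mem self_mem_nhdsWithin
        (mem_nhdsWithin_of_mem_nhds (Ioi_mem_nhds hs.2)))
    obtain ⟨a, haA, haS, haI⟩ := Filter.nonempty_of_mem hmemF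
    calc varPlus F (T ∩ Iic s) + exc (F s) (F t)
        ≤ varPlus F (T ∩ Iic s) + (exc (F s) (F a) + exc (F a) (F t)) :=
          add_le_add_right (exc_triangle _ _ _) _
      _ = (varPlus F (T ∩ Iic s) + exc (F s) (F a)) + exc (F a) (F t) := (add_assoc _ _ _).symm
      _ ≤ varPlus F (T ∩ Iic a) + exc (F a) (F t) :=
          add_le_add_left (varPlus_Iic_add_exc_le hs.1 haS.1 (le_of_lt haI)) _
      _ ≤ (⨆ s' ∈ T ∩ Iio t, varPlus F (T ∩ Iic s')) + exc (F a) (F t) :=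
          add_le_add_left
            (le_iSup₂ (f := fun s' (_ : s' ∈ T ∩ Iio t) => varPlus F (T ∩ Iic s')) a haS) _
      _ ≤ (⨆ s' ∈ T ∩ Iio t, varPlus F (T ∩ Iic s'))
            + ⨆ a' ∈ A, exc (F a') (F t) :=
          add_le_add_right
            (le_iSup₂ (f := fun a' (_ : a' ∈ A) => exc (F a') (F t)) a haA) _
  · rw [ENNReal.biSup_add hneS]
    refine iSup₂_le fun s0 hs0 => ?_
    have hA0 : (T ∩ Iio t) ∩ Ioi s0 ∈ nhdsWithin t (T ∩ Iio t) :=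
      inter_mem self_mem_nhdsWithin (mem_nhdsWithin_of_mem_nhds (Ioi_mem_nhds hs0.2))
    have hNE : ((T ∩ Iio t) ∩ Ioi s0).Nonempty := Filter.nonempty_of_mem hA0
    have hLle : Filter.limsup (fun s => exc (F s) (F t)) (nhdsWithin t (T ∩ Iio t))
        ≤ ⨆ a ∈ (T ∩ Iio t) ∩ Ioi s0, exc (F a) (F t) := by
      rw [limsup_eq_iInf_iSup]
      exact iInf₂_le _ hA0
    calc varPlus F (T ∩ Iic s0)
          + Filter.limsup (fun s => exc (F s) (F t)) (nhdsWithin t (T ∩ Iio t))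
        ≤ varPlus F (T ∩ Iic s0) + ⨆ a ∈ (T ∩ Iio t) ∩ Ioi s0, exc (F a) (F t) :=
          add_le_add_right hLle _
      _ = ⨆ a ∈ (T ∩ Iio t) ∩ Ioi s0, (varPlus F (T ∩ Iic s0) + exc (F a) (F t)) :=
          ENNReal.add_biSup hNE _
      _ ≤ ⨆ s ∈ T ∩ Iio t, (varPlus F (T ∩ Iic s) + exc (F s) (F t)) := by
          refine iSup₂_le fun a ha => ?_
          refine le_trans (add_le_add_left
            (varPlus_mono (show T ∩ Iic s0 ⊆ T ∩ Iic a from fun x hx => ⟨hx.1, Set.mem_Iic.mpr ((Set.mem_Iic.mp hx.2).trans (le_of_lt ha.2))⟩) F) _) ?_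
          exact le_iSup₂
            (f := fun s (_ : s ∈ T ∩ Iio t) => varPlus F (T ∩ Iic s) + exc (F s) (F t)) a ha.1
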